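/- Consider the proximal gradient iteration θ_{k+1} = argmin_u { βJ(u) + (1/(2α))‖u − θ_k‖² + ∇l(θ_k)ᵀ(u − θ_k) } with constant stepsize α satisfying 1/α > max(2βζ, (1/8)‖X‖² + βζ), where J is a weakly convex sparsity inducing function with parameter ζ and l is the empirical logistic loss. Then the sequence of objective values l(θ_k) + βJ(θ_k) is monotonically non-increasing and convergent, and ‖θ_{k+1} − θ_k‖ → 0. -/

import Mathlib

open scoped RealInnerProductSpace BigOperators
open Filter

noncomputable def logisticLoss {d N : ℕ} (x : Fin N → EuclideanSpace ℝ (Fin d))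
    (y : Fin N → ℝ) (θ : EuclideanSpace ℝ (Fin d)) : ℝ :=
  ∑ i, (Real.log (1 + Real.exp ⟪θ, x i⟫) - y i * ⟪θ, x i⟫)

/-! ### Auxiliary lemmas -/

noncomputable def auxSig (s : ℝ) : ℝ := Real.exp s / (1 + Real.exp s)

lemma auxOneAddExpPos (s : ℝ) : 0 < 1 + Real.exp s := by positivity

lemma auxHasDerivAtSig (s : ℝ) :
    HasDerivAt auxSig (Real.exp s / (1 + Real.exp s) ^ 2) s := by
  have h := (Real.hasDerivAt_exp s).div ((Real.hasDerivAt_exp s).const_add 1)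
    (ne_of_gt (auxOneAddExpPos s))
  exact h.congr_deriv (by ring)

lemma auxSigDerivLe (s : ℝ) : Real.exp s / (1 + Real.exp s) ^ 2 ≤ 1 / 4 := by
  rw [div_le_div_iff₀ (by positivity) (by norm_num)]
  nlinarith [sq_nonneg (1 - Real.exp s), Real.exp_pos s]

lemma auxSigLipschitz (a b : ℝ) : |auxSig a - auxSig b| ≤ (1/4) * |a - b| := by
  have hdiff : Differentiable ℝ auxSig := fun s => (auxHasDerivAtSig s).differentiableAt
  have : LipschitzWith (1/4 : NNReal) auxSig := by
    apply lipschitzWith_of_nnnorm_deriv_le hdiff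
    intro s
    rw [(auxHasDerivAtSig s).deriv]
    have h2 : ‖Real.exp s / (1 + Real.exp s) ^ 2‖ ≤ ((1/4 : NNReal) : ℝ) := by
      rw [Real.norm_eq_abs, abs_of_nonneg (by positivity)]
      push_cast
      exact auxSigDerivLe s
    exact_mod_cast h2
  have h := this.dist_le_mul a b
  simpa [Real.dist_eq] using h

section AuxSmooth
variable {d N : ℕ} (x : Fin N → EuclideanSpace ℝ (Fin d)) (y : Fin N → ℝ)

lemma auxPsiHasDeriv (b c : Fin N → ℝ) (t : ℝ) :
    HasDerivAt (fun t : ℝ => ∑ i, (Real.log (1 + Real.exp (c i + t * b i)) - y i * (c i + t * b i)))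
      (∑ i, (auxSig (c i + t * b i) - y i) * b i) t := by
  apply HasDerivAt.fun_sum
  intro i _
  have hlin : HasDerivAt (fun t : ℝ => c i + t * b i) (b i) t :=
    (hasDerivAt_mul_const (b i)).const_add (c i)
  have hexp := hlin.exp
  have h1 : HasDerivAt (fun t : ℝ => 1 + Real.exp (c i + t * b i))
      (Real.exp (c i + t * b i) * b i) t := hexp.const_add 1
  have hlog := h1.log (by positivity)
  have hy : HasDerivAt (fun t : ℝ => y i * (c i + t * b i)) (y i * b i) t := hlin.const_mul (y i)
  exact (hlog.sub hy).congr_deriv (by simp only [auxSig]; ring)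

lemma auxLogisticSmooth (θ v g : EuclideanSpace ℝ (Fin d))
    (hg : HasGradientAt (logisticLoss x y) g θ) :
    logisticLoss x y (θ + v) ≤ logisticLoss x y θ + ⟪g, v⟫ +
      ((1/4) * ∑ i, ⟪v, x i⟫ ^ 2) / 2 := by
  set b : Fin N → ℝ := fun i => ⟪v, x i⟫ with hb
  set c : Fin N → ℝ := fun i => ⟪θ, x i⟫ with hc
  set M : ℝ := (1/4) * ∑ i, b i ^ 2 with hM
  set ψ : ℝ → ℝ := fun t =>
    ∑ i, (Real.log (1 + Real.exp (c i + t * b i)) - y i * (c i + t * b i)) with hψ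
  set ψd : ℝ → ℝ := fun t => ∑ i, (auxSig (c i + t * b i) - y i) * b i with hψd
  have hpath : ∀ t : ℝ, logisticLoss x y (θ + t • v) = ψ t := by
    intro t
    simp only [logisticLoss, hψ]
    congr 1; funext i
    rw [inner_add_left, real_inner_smul_left]
  have hD : ∀ t, HasDerivAt ψ (ψd t) t := auxPsiHasDeriv y b c
  have hcomp : HasDerivAt (fun t : ℝ => logisticLoss x y (θ + t • v)) ⟪g, v⟫ 0 := by
    have hf : HasFDerivAt (logisticLoss x y) (InnerProductSpace.toDual ℝ _ g) θ :=
      (hasGradientAt_iff_hasFDerivAt).mp hg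
    have hp : HasDerivAt (fun t : ℝ => θ + t • v) v 0 := by
      simpa using ((hasDerivAt_id (0:ℝ)).smul_const v).const_add θ
    have hf' : HasFDerivAt (logisticLoss x y) (InnerProductSpace.toDual ℝ _ g) (θ + (0:ℝ) • v) := by
      simpa using hf
    have := hf'.comp_hasDerivAt (x := (0:ℝ)) hp
    exact this
  have hψ0 : ψd 0 = ⟪g, v⟫ := by
    have h1 : HasDerivAt ψ ⟪g, v⟫ 0 := by
      have : (fun t : ℝ => logisticLoss x y (θ + t • v)) = ψ := funext hpath
      rwa [this] at hcomp
    exact (hD 0).unique h1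
  have hLip : ∀ t ∈ Set.Icc (0:ℝ) 1, ψd t - ψd 0 ≤ M * t := by
    intro t ht
    have : ψd t - ψd 0 = ∑ i, (auxSig (c i + t * b i) - auxSig (c i)) * b i := by
      simp only [hψd]
      rw [← Finset.sum_sub_distrib]
      congr 1; funext i; simp; ring
    rw [this, hM, Finset.mul_sum, Finset.sum_mul]
    apply Finset.sum_le_sum
    intro i _
    have h1 : (auxSig (c i + t * b i) - auxSig (c i)) * b i ≤
        |auxSig (c i + t * b i) - auxSig (c i)| * |b i| := by
      calc _ ≤ |(auxSig (c i + t * b i) - auxSig (c i)) * b i| := le_abs_self _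
        _ = _ := abs_mul _ _
    have h2 := auxSigLipschitz (c i + t * b i) (c i)
    have h3 : |c i + t * b i - c i| = t * |b i| := by
      rw [show c i + t * b i - c i = t * b i by ring, abs_mul, abs_of_nonneg ht.1]
    calc (auxSig (c i + t * b i) - auxSig (c i)) * b i
        ≤ |auxSig (c i + t * b i) - auxSig (c i)| * |b i| := h1
      _ ≤ ((1/4) * (t * |b i|)) * |b i| := by
          apply mul_le_mul_of_nonneg_right _ (abs_nonneg _)
          rw [← h3]; exact h2
      _ = 1 / 4 * b i ^ 2 * t := by rw [← sq_abs]; ring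
  set χ : ℝ → ℝ := fun t => ψ 0 + t * ψd 0 + (M/2) * t^2 - ψ t with hχ
  have hχD : ∀ t, HasDerivAt χ (ψd 0 + M * t - ψd t) t := by
    intro t
    have h1 : HasDerivAt (fun t : ℝ => ψ 0 + t * ψd 0 + (M/2) * t^2) (ψd 0 + M * t) t := by
      have ha : HasDerivAt (fun t : ℝ => t * ψd 0) (ψd 0) t := hasDerivAt_mul_const _
      have hb2 : HasDerivAt (fun t : ℝ => (M/2) * t^2) ((M/2) * (2*t)) t := by
        have := (hasDerivAt_pow 2 t).const_mul (M/2)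
        simpa using this
      have := (ha.const_add (ψ 0)).add hb2
      exact this.congr_deriv (by ring)
    exact h1.sub (hD t)
  have hmono : MonotoneOn χ (Set.Icc (0:ℝ) 1) := by
    apply monotoneOn_of_deriv_nonneg (convex_Icc 0 1)
    · exact (Continuous.continuousOn (by
        have : Differentiable ℝ χ := fun t => (hχD t).differentiableAt
        exact this.continuous))
    · intro t _
      exact (hχD t).differentiableAt.differentiableWithinAt
    · intro t ht
      rw [interior_Icc] at ht
      rw [(hχD t).deriv]
      have := hLip t ⟨le_of_lt ht.1, le_of_lt ht.2⟩
      linarith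
  have h01 : χ 0 ≤ χ 1 := hmono (by norm_num) (by norm_num) (by norm_num)
  have e0 : χ 0 = 0 := by simp [hχ]
  have e1 : χ 1 = ψ 0 + ψd 0 + M/2 - ψ 1 := by simp [hχ]
  have key : ψ 1 ≤ ψ 0 + ψd 0 + M / 2 := by rw [e0, e1] at h01; linarith
  have hv1 : logisticLoss x y (θ + v) = ψ 1 := by
    have := hpath 1; simpa using this
  have hv0 : logisticLoss x y θ = ψ 0 := by
    have := hpath 0; simpa using this
  rw [hv1, hv0, ← hψ0]
  exact key

end AuxSmooth

lemma auxSumInnerSqLe {d N : ℕ} (x : Fin N → EuclideanSpace ℝ (Fin d))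
    (X : Matrix (Fin d) (Fin N) ℝ) (hX : ∀ i j, X j i = x i j)
    (v : EuclideanSpace ℝ (Fin d)) :
    ∑ i, ⟪v, x i⟫ ^ 2 ≤
      ‖LinearMap.toContinuousLinearMap (Matrix.toEuclideanLin X)‖ ^ 2 * ‖v‖ ^ 2 := by
  set A := LinearMap.toContinuousLinearMap (Matrix.toEuclideanLin X) with hA
  set w : EuclideanSpace ℝ (Fin N) := (WithLp.equiv 2 (Fin N → ℝ)).symm (fun i => ⟪v, x i⟫) with hwdef
  have hw : ∀ i, w i = ⟪v, x i⟫ := fun i => rfl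
  have hS : ∑ i, ⟪v, x i⟫ ^ 2 = ‖w‖ ^ 2 := by
    rw [← real_inner_self_eq_norm_sq, PiLp.inner_apply]
    simp [hw, sq]
  have happly : ∀ j, (A w) j = ∑ i, X j i * w i := fun j => rfl
  have hAw : ⟪A w, v⟫ = ‖w‖ ^ 2 := by
    rw [← real_inner_self_eq_norm_sq]
    simp only [PiLp.inner_apply, RCLike.inner_apply, conj_trivial, happly]
    calc ∑ j, v j * (∑ i, X j i * w i) = ∑ j, ∑ i, X j i * w i * v j := by
          simp only [Finset.mul_sum]
          exact Finset.sum_congr rfl (fun j _ => Finset.sum_congr rfl (fun i _ => by ring))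
      _ = ∑ i, ∑ j, X j i * w i * v j := Finset.sum_comm
      _ = ∑ i, w i * w i := by
          apply Finset.sum_congr rfl
          intro i _
          have hinner : (⟪v, x i⟫:ℝ) = ∑ j, x i j * v j := by
            rw [PiLp.inner_apply]; simp [mul_comm]
          have h2 : ∑ j, X j i * w i * v j = w i * ∑ j, x i j * v j := by
            rw [Finset.mul_sum]
            apply Finset.sum_congr rfl
            intro j _
            rw [hX]; ring
          rw [h2, ← hinner, hw i]
  have hbound : ‖w‖ ^ 2 ≤ ‖A‖ * ‖w‖ * ‖v‖ := by
    rw [← hAw]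
    calc ⟪A w, v⟫ ≤ ‖A w‖ * ‖v‖ := real_inner_le_norm _ _
      _ ≤ ‖A‖ * ‖w‖ * ‖v‖ :=
        mul_le_mul_of_nonneg_right (A.le_opNorm w) (norm_nonneg _)
  rw [hS]
  rcases eq_or_lt_of_le (norm_nonneg w) with h0 | h0
  · rw [← h0]; simpa using mul_nonneg (sq_nonneg ‖A‖) (sq_nonneg ‖v‖)
  · have h1 : ‖w‖ ≤ ‖A‖ * ‖v‖ := by nlinarith
    calc ‖w‖ ^ 2 ≤ (‖A‖ * ‖v‖) ^ 2 := by
          apply pow_le_pow_left₀ (norm_nonneg _) h1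
      _ = ‖A‖ ^ 2 * ‖v‖ ^ 2 := by ring

lemma auxNormMix {E : Type*} [NormedAddCommGroup E] [InnerProductSpace ℝ E] (t : ℝ) (a b : E) :
    ‖(1-t)•a + t•b‖^2 = (1-t)*‖a‖^2 + t*‖b‖^2 - t*(1-t)*‖a - b‖^2 := by
  have h1 := norm_add_sq_real ((1-t)•a) (t•b)
  have h2 := norm_sub_sq_real a b
  rw [norm_smul, norm_smul, real_inner_smul_left, real_inner_smul_right, mul_pow, mul_pow] at h1
  simp only [Real.norm_eq_abs, sq_abs] at h1
  rw [h1, h2]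
  ring

lemma auxFmix (F : ℝ → ℝ) (ζ : ℝ) (hH : ConvexOn ℝ Set.univ (fun t => F t + ζ * t ^ 2))
    {t : ℝ} (ht0 : 0 ≤ t) (ht1 : t ≤ 1) (a b : ℝ) :
    F ((1-t)*a + t*b) ≤ (1-t)*F a + t*F b + ζ*(t*(1-t)*(a-b)^2) := by
  have h := hH.2 (Set.mem_univ a) (Set.mem_univ b) (by linarith : (0:ℝ) ≤ 1-t) ht0 (by ring)
  simp only [smul_eq_mul] at h
  nlinarith [h]

lemma auxStrongMin {n : ℕ} (F : ℝ → ℝ) (ζ β α : ℝ) (hβ : 0 ≤ β) (hα : 0 < α)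
    (hH : ConvexOn ℝ Set.univ (fun t => F t + ζ * t ^ 2))
    (p q w u : EuclideanSpace ℝ (Fin n))
    (hmin : ∀ z : EuclideanSpace ℝ (Fin n),
      β * (∑ j, F (w j)) + (1/(2*α)) * ‖w - p‖^2 + ⟪q, w - p⟫ ≤
        β * (∑ j, F (z j)) + (1/(2*α)) * ‖z - p‖^2 + ⟪q, z - p⟫) :
    β * (∑ j, F (w j)) + (1/(2*α)) * ‖w - p‖^2 + ⟪q, w - p⟫ + (1/(2*α) - β*ζ) * ‖u - w‖^2 ≤
      β * (∑ j, F (u j)) + (1/(2*α)) * ‖u - p‖^2 + ⟪q, u - p⟫ := by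
  set G : EuclideanSpace ℝ (Fin n) → ℝ := fun z =>
    β * (∑ j, F (z j)) + (1/(2*α)) * ‖z - p‖^2 + ⟪q, z - p⟫ with hG
  set m2 : ℝ := 1/(2*α) - β*ζ with hm2
  set D : ℝ := ‖u - w‖^2 with hD
  show G w + m2 * D ≤ G u
  have hDnn : 0 ≤ D := sq_nonneg _
  have hkey : ∀ t : ℝ, 0 ≤ t → t ≤ 1 →
      G ((1-t)•w + t•u) ≤ (1-t) * G w + t * G u - m2 * (t*(1-t)*D) := by
    intro t ht0 ht1
    set vt := (1-t)•w + t•u with hvt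
    have hcoord : ∀ j, vt j = (1-t) * w j + t * u j := by
      intro j; simp [hvt]
    have hsub : vt - p = (1-t)•(w-p) + t•(u-p) := by
      rw [hvt]; module
    have hDsum : ∑ j, (w j - u j)^2 = ‖w - u‖^2 := by
      rw [← real_inner_self_eq_norm_sq, PiLp.inner_apply]
      simp [sq]
    have hFpart : ∑ j, F (vt j) ≤
        (1-t) * (∑ j, F (w j)) + t * (∑ j, F (u j)) + ζ*(t*(1-t)*D) := by
      have : ∀ j, F (vt j) ≤ (1-t)*F (w j) + t*F (u j) + ζ*(t*(1-t)*(w j - u j)^2) := by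
        intro j; rw [hcoord j]; exact auxFmix F ζ hH ht0 ht1 _ _
      calc ∑ j, F (vt j) ≤ ∑ j, ((1-t)*F (w j) + t*F (u j) + ζ*(t*(1-t)*(w j - u j)^2)) :=
            Finset.sum_le_sum (fun j _ => this j)
        _ = (1-t) * (∑ j, F (w j)) + t * (∑ j, F (u j)) + ζ*(t*(1-t)*(∑ j, (w j - u j)^2)) := by
            rw [Finset.sum_add_distrib, Finset.sum_add_distrib, ← Finset.mul_sum, ← Finset.mul_sum]
            have he : ζ*(t*(1-t)*(∑ j, (w j - u j)^2)) = ∑ j, ζ*(t*(1-t)*(w j - u j)^2) := by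
              rw [Finset.mul_sum, Finset.mul_sum]
            rw [he]
        _ = _ := by rw [hDsum, norm_sub_rev w u]
    have hnorm : ‖vt - p‖^2 = (1-t)*‖w-p‖^2 + t*‖u-p‖^2 - t*(1-t)*D := by
      rw [hsub, auxNormMix]
      have h9 : (w - p) - (u - p) = w - u := by abel
      rw [h9, norm_sub_rev w u]
    have hinner : ⟪q, vt - p⟫ = (1-t)*⟪q, w-p⟫ + t*⟪q, u-p⟫ := by
      rw [hsub, inner_add_right, real_inner_smul_right, real_inner_smul_right]
    have hβF := mul_le_mul_of_nonneg_left hFpart hβ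
    simp only [hG]
    rw [hnorm, hinner]
    nlinarith [hβF]
  rw [← sub_nonneg]
  rw [← not_lt]
  intro hlt
  set ε : ℝ := G w + m2 * D - G u with hε
  have hε0 : 0 < ε := by linarith
  set C : ℝ := |m2| * D with hC
  have hC0 : 0 ≤ C := mul_nonneg (abs_nonneg _) hDnn
  set t : ℝ := min 1 (ε/(2*(C+1))) with ht
  have ht0 : 0 < t := lt_min one_pos (by positivity)
  have ht1 : t ≤ 1 := min_le_left _ _
  have h1 := hkey t (le_of_lt ht0) ht1
  have h2 := hmin ((1-t)•w + t•u)
  have h3 : t * G w ≤ t * G u - m2 * (t*(1-t)*D) := by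
    have : G w ≤ (1-t) * G w + t * G u - m2 * (t*(1-t)*D) := le_trans h2 h1
    nlinarith [this]
  have h4 : G w ≤ G u - m2 * ((1-t)*D) := by
    have h3' : t * G w ≤ t * (G u - m2 * ((1-t)*D)) := by
      calc t * G w ≤ t * G u - m2 * (t*(1-t)*D) := h3
        _ = t * (G u - m2 * ((1-t)*D)) := by ring
    exact (mul_le_mul_iff_right₀ ht0).mp h3'
  have h5 : m2 * (t*D) ≤ C * t := by
    calc m2 * (t*D) ≤ |m2 * (t*D)| := le_abs_self _
      _ = |m2| * (t*D) := by rw [abs_mul, abs_of_nonneg (mul_nonneg ht0.le hDnn)]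
      _ = C * t := by rw [hC]; ring
  have h6 : C * t ≤ ε/2 := by
    have : t ≤ ε/(2*(C+1)) := min_le_right _ _
    calc C * t ≤ C * (ε/(2*(C+1))) := mul_le_mul_of_nonneg_left this hC0
      _ ≤ (C+1) * (ε/(2*(C+1))) := by
          apply mul_le_mul_of_nonneg_right (by linarith) (by positivity)
      _ = ε/2 := by field_simp
  have hmtD : m2*((1-t)*D) = m2*D - m2*(t*D) := by ring
  have h7 : G w + m2*D ≤ G u + ε/2 := by linarith [h4, h5, h6]
  linarith [h7, hε0]

lemma auxLogisticNonneg {d N : ℕ} (x : Fin N → EuclideanSpace ℝ (Fin d)) (y : Fin N → ℝ)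
    (hy : ∀ i, y i = 0 ∨ y i = 1) (θ : EuclideanSpace ℝ (Fin d)) :
    0 ≤ logisticLoss x y θ := by
  apply Finset.sum_nonneg
  intro i _
  rcases hy i with h | h <;> rw [h]
  · simp only [zero_mul, sub_zero]
    apply Real.log_nonneg
    linarith [Real.exp_pos ⟪θ, x i⟫]
  · rw [one_mul, sub_nonneg]
    have h1 : Real.exp ⟪θ, x i⟫ ≤ 1 + Real.exp ⟪θ, x i⟫ := by linarith
    have h2 := Real.log_le_log (Real.exp_pos _) h1
    rwa [Real.log_exp] at h2

theorem prox_grad_convergence {d N : ℕ}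
    (x : Fin N → EuclideanSpace ℝ (Fin d)) (y : Fin N → ℝ)
    (hy : ∀ i, y i = 0 ∨ y i = 1)
    (F : ℝ → ℝ) (ζ : ℝ) (hζ : 0 < ζ)
    (hnonneg : ∀ t, 0 ≤ F t)
    (heven : ∀ t, F (-t) = F t)
    (h0 : F 0 = 0)
    (hmono : MonotoneOn F (Set.Ici 0))
    (hratio : AntitoneOn (fun t => F t / t) (Set.Ioi 0))
    (hH : ConvexOn ℝ Set.univ (fun t => F t + ζ * t ^ 2))
    (β : ℝ) (hβ : 0 < β)
    (g : EuclideanSpace ℝ (Fin d) → EuclideanSpace ℝ (Fin d))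
    (hg : ∀ θ, HasGradientAt (logisticLoss x y) (g θ) θ)
    (X : Matrix (Fin d) (Fin N) ℝ) (hX : ∀ i j, X j i = x i j)
    (α : ℝ) (hα : 0 < α)
    (hstep : 1 / α > max (2 * β * ζ)
      ((1 / 8) * ‖LinearMap.toContinuousLinearMap (Matrix.toEuclideanLin X)‖ ^ 2 + β * ζ))
    (θ : ℕ → EuclideanSpace ℝ (Fin d))
    (hiter : ∀ k, ∀ u : EuclideanSpace ℝ (Fin d),
      β * (∑ j, F (θ (k + 1) j)) + (1 / (2 * α)) * ‖θ (k + 1) - θ k‖ ^ 2 +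
          ⟪g (θ k), θ (k + 1) - θ k⟫ ≤
        β * (∑ j, F (u j)) + (1 / (2 * α)) * ‖u - θ k‖ ^ 2 + ⟪g (θ k), u - θ k⟫) :
    Antitone (fun k => logisticLoss x y (θ k) + β * ∑ j, F (θ k j)) ∧
      (∃ c : ℝ, Tendsto (fun k => logisticLoss x y (θ k) + β * ∑ j, F (θ k j))
        atTop (nhds c)) ∧
      Tendsto (fun k => ‖θ (k + 1) - θ k‖) atTop (nhds 0) := by
  set A := LinearMap.toContinuousLinearMap (Matrix.toEuclideanLin X) with hAdef
  set obj : ℕ → ℝ := fun k => logisticLoss x y (θ k) + β * ∑ j, F (θ k j) with hobj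
  have hcpos : 0 < 1/α - β*ζ - ‖A‖^2/8 := by
    have h1 : (1/8) * ‖A‖^2 + β*ζ < 1/α := lt_of_le_of_lt (le_max_right _ _) hstep
    linarith
  -- descent inequality
  have hdesc : ∀ k, obj (k+1) + (1/α - β*ζ - ‖A‖^2/8) * ‖θ (k+1) - θ k‖^2 ≤ obj k := by
    intro k
    have hsm := auxLogisticSmooth x y (θ k) (θ (k+1) - θ k) (g (θ k)) (hg (θ k))
    rw [show θ k + (θ (k+1) - θ k) = θ (k+1) by abel] at hsm
    have hsum := auxSumInnerSqLe x X hX (θ (k+1) - θ k)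
    have hsm2 : logisticLoss x y (θ (k+1)) ≤ logisticLoss x y (θ k) +
        ⟪g (θ k), θ (k+1) - θ k⟫ + (‖A‖^2/8) * ‖θ (k+1) - θ k‖^2 := by
      calc logisticLoss x y (θ (k+1)) ≤ _ := hsm
        _ ≤ _ := by rw [← hAdef] at hsum; linarith
    have hsmin := auxStrongMin F ζ β α hβ.le hα hH (θ k) (g (θ k)) (θ (k+1)) (θ k) (hiter k)
    rw [sub_self (θ k)] at hsmin
    simp only [norm_zero, inner_zero_right, zero_pow, mul_zero, add_zero] at hsmin
    rw [norm_sub_rev (θ k) (θ (k+1))] at hsmin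
    rw [show (1:ℝ)/(2*α) = (1/2) * (1/α) from by ring] at hsmin
    simp only [hobj]
    linarith [hsm2, hsmin]
  have hnn : ∀ k, (0:ℝ) ≤ (1/α - β*ζ - ‖A‖^2/8) * ‖θ (k+1) - θ k‖^2 :=
    fun k => mul_nonneg hcpos.le (sq_nonneg _)
  have hanti : Antitone obj := antitone_nat_of_succ_le
    (fun k => le_trans (le_add_of_nonneg_right (hnn k)) (hdesc k))
  have hobj0 : ∀ k, 0 ≤ obj k := fun k =>
    add_nonneg (auxLogisticNonneg x y hy (θ k))
      (mul_nonneg hβ.le (Finset.sum_nonneg fun j _ => hnonneg _))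
  have hbdd : BddBelow (Set.range obj) := ⟨0, by rintro v ⟨k, rfl⟩; exact hobj0 k⟩
  have hconv : Tendsto obj atTop (nhds (⨅ k, obj k)) := tendsto_atTop_ciInf hanti hbdd
  have hconv1 : Tendsto (fun k => obj (k+1)) atTop (nhds (⨅ k, obj k)) :=
    hconv.comp (tendsto_add_atTop_nat 1)
  have hdiff0 : Tendsto (fun k => obj k - obj (k+1)) atTop (nhds 0) := by
    simpa using hconv.sub hconv1
  have hsq : Tendsto (fun k => (1/α - β*ζ - ‖A‖^2/8) * ‖θ (k+1) - θ k‖^2) atTop (nhds 0) :=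
    squeeze_zero hnn (fun k => by linarith [hdesc k]) hdiff0
  have hsq2 : Tendsto (fun k => ‖θ (k+1) - θ k‖^2) atTop (nhds 0) := by
    have := hsq.const_mul (1/(1/α - β*ζ - ‖A‖^2/8))
    rw [mul_zero] at this
    convert this using 2 with k
    rw [one_div]
    exact (inv_mul_cancel_left₀ (ne_of_gt hcpos) _).symm
  have hnorm0 : Tendsto (fun k => ‖θ (k+1) - θ k‖) atTop (nhds 0) := by
    have hs : Tendsto (fun k => Real.sqrt (‖θ (k+1) - θ k‖^2)) atTop (nhds (Real.sqrt 0)) :=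
      (Real.continuous_sqrt.tendsto 0).comp hsq2
    rw [Real.sqrt_zero] at hs
    convert hs using 2 with k
    rw [Real.sqrt_sq (norm_nonneg _)]
  exact ⟨hanti, ⟨⨅ k, obj k, hconv⟩, hnorm0⟩
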